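/- Assume 𝒰(T) is bounded in norm as T → 0⁺ and 𝒫(T) = CPCᵀ + R/T with R positive definite. Then the detection gap E[Δg_k](T) = 2·trace(Cᵀ 𝒫(T)⁻¹ C 𝒰(T))·𝒯 satisfies E[Δg_k](T) → 0 as T → 0⁺. -/

import Mathlib

open Matrix Filter Topology

attribute [local instance] Matrix.linftyOpNormedAddCommGroup Matrix.linftyOpNormedSpace
  Matrix.linftyOpNormedRing Matrix.linftyOpNormedAlgebra

lemma aux_smul_posSemidef {m : ℕ} {k : ℝ} (hk : 0 ≤ k) {A : Matrix (Fin m) (Fin m) ℝ}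
    (hA : A.PosSemidef) : (k • A).PosSemidef := by
  refine ⟨?_, fun x => ?_⟩
  · unfold Matrix.IsHermitian
    rw [conjTranspose_smul, hA.1.eq]
    simp
  · exact (hA.smul hk).2 x

lemma aux_entry_le {m n : ℕ} (A : Matrix (Fin m) (Fin n) ℝ) (i : Fin m) (j : Fin n) :
    |A i j| ≤ ‖A‖ := by
  calc |A i j| = ‖A i j‖ := rfl
    _ ≤ ‖A‖ := by
        rw [Matrix.linfty_opNorm_def]
        calc ‖A i j‖ ≤ ∑ k, ‖A i k‖ :=
              Finset.single_le_sum (fun k _ => norm_nonneg _) (Finset.mem_univ j)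
          _ = ((∑ k, ‖A i k‖₊ : NNReal) : ℝ) := by push_cast; rfl
          _ ≤ _ := by
              exact_mod_cast Finset.le_sup (f := fun i => ∑ k, ‖A i k‖₊) (Finset.mem_univ i)

lemma aux_trace_le {n : ℕ} (A : Matrix (Fin n) (Fin n) ℝ) : |A.trace| ≤ n * ‖A‖ := by
  calc |A.trace| ≤ ∑ i, |A i i| := by
        rw [Matrix.trace]; exact Finset.abs_sum_le_sum_abs _ _
    _ ≤ ∑ _i : Fin n, ‖A‖ := Finset.sum_le_sum fun i _ => aux_entry_le A i i
    _ = n * ‖A‖ := by simp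

/-- If `𝒰(T)` is bounded in norm as `T → 0⁺` and `𝒫(T) = C P Cᵀ + R / T` with `R` positive
definite, then the detection gap `E[Δg_k](T) = 2 trace(Cᵀ 𝒫(T)⁻¹ C 𝒰(T)) 𝒯` tends to `0` as
`T → 0⁺`. -/
theorem detection_gap_vanishes {m n : ℕ} (𝒯 : ℕ)
    (C : Matrix (Fin m) (Fin n) ℝ) (P : Matrix (Fin n) (Fin n) ℝ)
    (R : Matrix (Fin m) (Fin m) ℝ) (𝒰 : ℝ → Matrix (Fin n) (Fin n) ℝ)
    (hP : P.PosSemidef) (hR : R.PosDef)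
    (hbound : ∃ M ε : ℝ, 0 < ε ∧ ∀ T ∈ Set.Ioo (0 : ℝ) ε, ‖𝒰 T‖ ≤ M) :
    Tendsto (fun T : ℝ => 2 * (Cᵀ * (C * P * Cᵀ + T⁻¹ • R)⁻¹ * C * 𝒰 T).trace * 𝒯)
      (𝓝[>] 0) (𝓝 0) := by
  obtain ⟨M, ε, hε, hM⟩ := hbound
  set S : Matrix (Fin m) (Fin m) ℝ := C * P * Cᵀ with hS
  have hSpsd : S.PosSemidef := by
    have := hP.mul_mul_conjTranspose_same C
    simpa [hS, Matrix.conjTranspose_eq_transpose_of_trivial] using this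
  -- For T ≥ 0, T • S + R is positive definite, hence invertible
  have hPD : ∀ T : ℝ, 0 ≤ T → (T • S + R).PosDef := fun T hT =>
    Matrix.PosDef.posSemidef_add (aux_smul_posSemidef hT hSpsd) hR
  have hUnit : ∀ T : ℝ, 0 ≤ T → IsUnit (T • S + R).det := fun T hT =>
    isUnit_iff_ne_zero.mpr (hPD T hT).det_pos.ne'
  -- key identity
  have key : ∀ T : ℝ, 0 < T → (S + T⁻¹ • R)⁻¹ = T • (T • S + R)⁻¹ := by
    intro T hT
    have h1 : S + T⁻¹ • R = T⁻¹ • (T • S + R) := by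
      rw [smul_add, smul_smul, inv_mul_cancel₀ hT.ne', one_smul]
    letI : Invertible (T⁻¹) := invertibleOfNonzero (inv_ne_zero hT.ne')
    rw [h1, Matrix.inv_smul _ T⁻¹ (hUnit T hT.le)]
    congr 1
    rw [invOf_eq_inv, inv_inv]
  -- continuity of the inverse at 0
  have hcont : ContinuousAt (fun T : ℝ => (T • S + R)⁻¹) 0 := by
    have h1 : Continuous (fun T : ℝ => T • S + R) := by continuity
    have h2 : ContinuousAt (fun A : Matrix (Fin m) (Fin m) ℝ => A⁻¹) ((0:ℝ) • S + R) := by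
      have h0 : ((0:ℝ) • S + R) = R := by simp
      rw [h0]
      have hdet : R.det ≠ 0 := hR.det_pos.ne'
      have : ContinuousAt (fun A : Matrix (Fin m) (Fin m) ℝ =>
          (A.det)⁻¹ • A.adjugate) R := by
        refine ContinuousAt.smul (f := fun A : Matrix (Fin m) (Fin m) ℝ => A.det⁻¹)
          (g := fun A : Matrix (Fin m) (Fin m) ℝ => A.adjugate) ?_ ?_
        · exact (continuousAt_inv₀ hdet).comp (continuous_id.matrix_det).continuousAt
        · exact (continuous_id.matrix_adjugate).continuousAt
      refine this.congr ?_
      filter_upwards [continuous_id.matrix_det.continuousAt.preimage_mem_nhds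
        (isOpen_compl_singleton.mem_nhds (by simpa using hdet))] with A hA
      rw [Matrix.inv_def, Ring.inverse_eq_inv']
    exact ContinuousAt.comp (x := (0:ℝ)) h2 h1.continuousAt
  -- bound on the inverse near 0
  obtain ⟨δ, hδ, hb⟩ : ∃ δ > 0, ∀ T : ℝ, |T| < δ → ‖(T • S + R)⁻¹‖ ≤ ‖R⁻¹‖ + 1 := by
    have : Tendsto (fun T : ℝ => ‖(T • S + R)⁻¹‖) (𝓝 0) (𝓝 ‖((0:ℝ) • S + R)⁻¹‖) :=
      (hcont.norm).tendsto
    have h0 : ((0:ℝ) • S + R) = R := by simp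
    rw [h0] at this
    have hev : ∀ᶠ T in 𝓝 (0:ℝ), ‖(T • S + R)⁻¹‖ < ‖R⁻¹‖ + 1 :=
      this.eventually (Filter.Tendsto.eventually_lt_const
        (by linarith [norm_nonneg (R⁻¹)]) tendsto_id)
    rw [Metric.eventually_nhds_iff] at hev
    obtain ⟨δ, hδ, h⟩ := hev
    exact ⟨δ, hδ, fun T hT => le_of_lt (h (by simpa [Real.dist_eq] using hT))⟩
  -- the main squeeze
  set K : ℝ := 2 * (n * (‖Cᵀ‖ * ((‖R⁻¹‖ + 1) * (‖C‖ * |M|)))) * 𝒯 with hK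
  have hsq : ∀ T ∈ Set.Ioo (0:ℝ) (min ε δ),
      ‖2 * (Cᵀ * (S + T⁻¹ • R)⁻¹ * C * 𝒰 T).trace * 𝒯‖ ≤ K * T := by
    intro T hT
    obtain ⟨hT0, hTlt⟩ := hT
    have hTε : T < ε := lt_of_lt_of_le hTlt (min_le_left _ _)
    have hTδ : |T| < δ := by rw [abs_of_pos hT0]; exact lt_of_lt_of_le hTlt (min_le_right _ _)
    rw [key T hT0]
    have hA : Cᵀ * T • (T • S + R)⁻¹ * C * 𝒰 T
        = T • (Cᵀ * (T • S + R)⁻¹ * C * 𝒰 T) := by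
      rw [Matrix.mul_smul, Matrix.smul_mul, Matrix.smul_mul]
    rw [hA, Matrix.trace_smul]
    have htr : |(Cᵀ * (T • S + R)⁻¹ * C * 𝒰 T).trace|
        ≤ n * (‖Cᵀ‖ * ((‖R⁻¹‖ + 1) * (‖C‖ * |M|))) := by
      refine (aux_trace_le _).trans ?_
      have hMT : ‖𝒰 T‖ ≤ |M| :=
        (hM T ⟨hT0, hTε⟩).trans (le_abs_self M)
      have h1 : ‖Cᵀ * (T • S + R)⁻¹ * C * 𝒰 T‖ ≤ ‖Cᵀ‖ * ((‖R⁻¹‖ + 1) * (‖C‖ * |M|)) := by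
        calc ‖Cᵀ * (T • S + R)⁻¹ * C * 𝒰 T‖
            ≤ ‖Cᵀ * (T • S + R)⁻¹ * C‖ * ‖𝒰 T‖ := Matrix.linfty_opNorm_mul _ _
          _ ≤ ‖Cᵀ * (T • S + R)⁻¹‖ * ‖C‖ * ‖𝒰 T‖ := by
              gcongr; exact Matrix.linfty_opNorm_mul _ _
          _ ≤ ‖Cᵀ‖ * ‖(T • S + R)⁻¹‖ * ‖C‖ * ‖𝒰 T‖ := by
              gcongr; exact Matrix.linfty_opNorm_mul _ _
          _ ≤ ‖Cᵀ‖ * (‖R⁻¹‖ + 1) * ‖C‖ * |M| := by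
              have := hb T hTδ
              have := hMT
              gcongr
          _ = ‖Cᵀ‖ * ((‖R⁻¹‖ + 1) * (‖C‖ * |M|)) := by ring
      have hn : (0:ℝ) ≤ n := Nat.cast_nonneg n
      exact mul_le_mul_of_nonneg_left h1 hn
    have hTnn : (0:ℝ) ≤ T := hT0.le
    calc ‖2 * (T • (Cᵀ * (T • S + R)⁻¹ * C * 𝒰 T).trace) * 𝒯‖
        = 2 * (T * |(Cᵀ * (T • S + R)⁻¹ * C * 𝒰 T).trace|) * 𝒯 := by
          rw [Real.norm_eq_abs, abs_mul, abs_mul, smul_eq_mul, abs_mul]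
          rw [abs_of_pos hT0]
          norm_num
      _ ≤ 2 * (T * (n * (‖Cᵀ‖ * ((‖R⁻¹‖ + 1) * (‖C‖ * |M|))))) * 𝒯 := by
          gcongr
      _ = K * T := by rw [hK]; ring
  -- conclude by squeezing
  have hKT : Tendsto (fun T : ℝ => K * T) (𝓝[>] (0:ℝ)) (𝓝 0) := by
    have : Tendsto (fun T : ℝ => K * T) (𝓝 (0:ℝ)) (𝓝 (K * 0)) :=
      (continuous_const.mul continuous_id).tendsto 0
    rw [mul_zero] at this
    exact this.mono_left nhdsWithin_le_nhds
  refine squeeze_zero_norm' ?_ hKT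
  filter_upwards [self_mem_nhdsWithin,
    Ioo_mem_nhdsGT_of_mem (Set.mem_Ico.mpr ⟨le_refl 0, lt_min hε hδ⟩)] with T hT1 hT2
  exact hsq T hT2
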